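/- Let k ≥ 2 be an integer, m, n nonnegative integers, and define F_k(m, n; x) = ((2m + k − 1)! / (m! · (2m + n + k − 1)! · (k/2)_m)) · (k/(2(k − 1)))^m · (e₂(x))^m (e₁(x))^n e^{−e₁(x)} for x ∈ ℝ^k. Then for every x = (x₁, …, x_k) ∈ (0, ∞)^k with k ≥ 2 (so that e₁(x) > 0 and e₂(x) > 0), the identity F_k(m, n + 1; x) − F_k(m, n; x) = − Σ_{i=1}^k ∂/∂x_i [ (x_i / (2m + n + k)) · F_k(m, n; x) ] holds, where ∂/∂x_i denotes the partial derivative with respect to the i-th coordinate. -/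

import Mathlib

open MeasureTheory Finset

/-- `e₁(x) = ∑ᵢ xᵢ` -/
noncomputable def e1 {k : ℕ} (x : Fin k → ℝ) : ℝ := ∑ i, x i

/-- `e₂(x) = ∑_{i<j} xᵢ xⱼ` -/
noncomputable def e2 {k : ℕ} (x : Fin k → ℝ) : ℝ := ∑ i, ∑ j ∈ Finset.Ioi i, x i * x j

/-- Pochhammer symbol `(y)ₘ = ∏_{i=0}^{m-1} (y + i)` -/
noncomputable def poch (y : ℝ) (m : ℕ) : ℝ := ∏ i ∈ Finset.range m, (y + i)

/-- The WZ integrand `F_k(m, n; x)` of the paper. -/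
noncomputable def F (k m n : ℕ) (x : Fin k → ℝ) : ℝ :=
  ((2 * m + k - 1).factorial : ℝ) /
      ((m.factorial : ℝ) * ((2 * m + n + k - 1).factorial : ℝ) * poch ((k : ℝ) / 2) m) *
    ((k : ℝ) / (2 * ((k : ℝ) - 1))) ^ m * e2 x ^ m * e1 x ^ n * Real.exp (-(e1 x))

theorem sum_off (k : ℕ) (x : Fin k → ℝ) :
    ∑ i, x i * (e1 x - x i) = 2 * e2 x := by
  unfold e1 e2
  have h := Finset.sum_sum_Ioi_add_eq_sum_sum_off_diag (fun i j : Fin k => x i * x j)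
  simp only [← Finset.sum_mul, Finset.compl_singleton,
    Finset.sum_erase_eq_sub (Finset.mem_univ _)] at h
  have lhs1 : ∑ i : Fin k, ∑ j ∈ Ioi i, (x j * x i + x i * x j)
      = 2 * ∑ i, ∑ j ∈ Finset.Ioi i, x i * x j := by
    rw [Finset.mul_sum]
    refine Finset.sum_congr rfl fun i _ => ?_
    rw [Finset.mul_sum]
    exact Finset.sum_congr rfl fun j _ => by ring
  rw [← lhs1, h]
  exact Finset.sum_congr rfl fun i _ => by ring

theorem e1_update {k : ℕ} (x : Fin k → ℝ) (i : Fin k) (t : ℝ) :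
    e1 (Function.update x i t) = (e1 x - x i) + t := by
  unfold e1
  rw [Finset.sum_update_of_mem (Finset.mem_univ i),
    Finset.sum_eq_sum_sdiff_singleton_add (Finset.mem_univ i) x]
  ring

theorem sumsq_update {k : ℕ} (x : Fin k → ℝ) (i : Fin k) (t : ℝ) :
    ∑ j, (Function.update x i t j)^2 = (∑ j, (x j)^2) - (x i)^2 + t^2 := by
  have : ∀ j, (Function.update x i t j)^2 = Function.update (fun j => (x j)^2) i (t^2) j := by
    intro j
    exact (Function.apply_update (fun _ y => y^2) x i t j)
  simp only [this]
  rw [Finset.sum_update_of_mem (Finset.mem_univ i),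
    Finset.sum_eq_sum_sdiff_singleton_add (Finset.mem_univ i) (fun j => (x j)^2)]
  ring

theorem e2_eq {k : ℕ} (x : Fin k → ℝ) : e2 x = ((e1 x)^2 - ∑ j, (x j)^2) / 2 := by
  have h := sum_off k x
  have h2 : ∑ i, x i * (e1 x - x i) = (e1 x)^2 - ∑ j, (x j)^2 := by
    simp only [mul_sub, Finset.sum_sub_distrib, ← Finset.sum_mul, ← sq]
    have he : (∑ i : Fin k, x i) = e1 x := rfl
    rw [he, sq]
  rw [h2] at h
  linarith

theorem e2_update {k : ℕ} (x : Fin k → ℝ) (i : Fin k) (t : ℝ) :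
    e2 (Function.update x i t) = e2 x + (t - x i) * (e1 x - x i) := by
  rw [e2_eq (Function.update x i t), e1_update, sumsq_update, e2_eq x]
  ring

/-- (WZ 1): `F_k(m,n+1;x) - F_k(m,n;x) = -∑ᵢ ∂/∂xᵢ [ (xᵢ/(2m+n+k)) F_k(m,n;x) ]`. -/
theorem stmt3 (k m n : ℕ) (hk : 2 ≤ k) (x : Fin k → ℝ) (hx : ∀ i, 0 < x i) :
    F k m (n + 1) x - F k m n x =
      - ∑ i : Fin k,
          deriv (fun t : ℝ =>
            t / (2 * (m : ℝ) + n + k) * F k m n (Function.update x i t)) (x i) := by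
  have hk0 : (0:ℝ) < k := by exact_mod_cast lt_of_lt_of_le two_pos hk
  set D : ℝ := 2 * (m : ℝ) + n + k with hD
  set S : ℝ := e1 x with hS
  set E : ℝ := e2 x with hE
  set C : ℝ := ((2 * m + k - 1).factorial : ℝ) /
      ((m.factorial : ℝ) * ((2 * m + n + k - 1).factorial : ℝ) * poch ((k : ℝ) / 2) m) *
    ((k : ℝ) / (2 * ((k : ℝ) - 1))) ^ m with hC
  have hD0 : D ≠ 0 := by
    rw [hD]
    have h1 : (0:ℝ) ≤ m := Nat.cast_nonneg m
    have h2 : (0:ℝ) ≤ n := Nat.cast_nonneg n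
    nlinarith
  have hFdef : ∀ y : Fin k → ℝ, F k m n y = C * e2 y ^ m * e1 y ^ n * Real.exp (-(e1 y)) :=
    fun y => rfl
  set ee : ℝ := Real.exp (-S) with hee
  have key : ∀ i : Fin k,
      deriv (fun t : ℝ => t / D * F k m n (Function.update x i t)) (x i) =
        C * E ^ m * S ^ n * ee / D
        + x i * ((((n:ℝ) * S^(n-1) * (C * E^m * ee) - C * E^m * S^n * ee)) / D)
        + (x i * (S - x i)) * ((m:ℝ) * E^(m-1) * (C * S^n * ee) / D) := by
    intro i
    have hfun : (fun t : ℝ => t / D * F k m n (Function.update x i t))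
        = fun t : ℝ => t / D * (C * (E + (t - x i) * (S - x i)) ^ m *
            ((S - x i) + t) ^ n * Real.exp (-((S - x i) + t))) := by
      funext t
      rw [hFdef (Function.update x i t), e2_update x i t, e1_update x i t, ← hS, ← hE]
    rw [hfun]
    have h1 : HasDerivAt (fun t : ℝ => t / D) (1 / D) (x i) := (hasDerivAt_id (x i)).div_const D
    have h2 : HasDerivAt (fun t : ℝ => E + (t - x i) * (S - x i)) (1 * (S - x i)) (x i) :=
      (((hasDerivAt_id (x i)).sub_const (x i)).mul_const (S - x i)).const_add E
    have h3 : HasDerivAt (fun t : ℝ => (S - x i) + t) 1 (x i) :=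
      (hasDerivAt_id (x i)).const_add (S - x i)
    have h4 : HasDerivAt (fun t : ℝ => Real.exp (-((S - x i) + t)))
        (Real.exp (-((S - x i) + x i)) * (-1)) (x i) := h3.neg.exp
    have H : HasDerivAt (fun t : ℝ => t / D * (C * (E + (t - x i) * (S - x i)) ^ m *
            ((S - x i) + t) ^ n * Real.exp (-((S - x i) + t)))) _ (x i) :=
      h1.mul ((((h2.pow m).const_mul C).mul (h3.pow n)).mul h4)
    rw [H.deriv]
    simp only [id_eq, Pi.pow_apply, Pi.mul_apply, sub_self, zero_mul, add_zero, sub_add_cancel, one_mul, mul_one, mul_neg]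
    rw [← hee]
    field_simp
    ring
  rw [Finset.sum_congr rfl fun i _ => key i]
  rw [Finset.sum_add_distrib, Finset.sum_add_distrib, Finset.sum_const, ← Finset.sum_mul,
    ← Finset.sum_mul]
  have hsum1 : (∑ i : Fin k, x i) = S := rfl
  have hsum2 : (∑ i : Fin k, x i * (S - x i)) = 2 * E := by
    rw [hS, hE]; exact sum_off k x
  rw [hsum1, hsum2, Finset.card_univ, Fintype.card_fin, nsmul_eq_mul]
  -- LHS rewriting
  have hpoch : (0:ℝ) < poch ((k : ℝ) / 2) m := by
    refine Finset.prod_pos fun i _ => ?_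
    have : (0:ℝ) ≤ i := Nat.cast_nonneg i
    linarith
  have hfact : ((2 * m + (n+1) + k - 1).factorial : ℝ)
      = D * ((2 * m + n + k - 1).factorial : ℝ) := by
    have h1 : 2 * m + (n+1) + k - 1 = (2 * m + n + k - 1) + 1 := by omega
    rw [h1, Nat.factorial_succ]
    have h2 : ((2*m+n+k-1 : ℕ) : ℝ) + 1 = D := by
      rw [hD]
      have h3 : 1 ≤ 2*m+n+k := by omega
      have : ((2*m+n+k-1 : ℕ) : ℝ) = 2*(m:ℝ)+n+k - 1 := by
        push_cast [Nat.cast_sub h3]; ring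
      rw [this]; ring
    push_cast
    rw [h2]
  have hFn : F k m n x = C * E ^ m * S ^ n * ee := rfl
  have hFn1 : F k m (n+1) x = S * (C * E ^ m * S ^ n * ee) / D := by
    rw [hC]
    unfold F
    rw [hfact, ← hS, ← hE, ← hee]
    have hf1 : ((m.factorial : ℝ)) ≠ 0 := by positivity
    have hf2 : (((2 * m + n + k - 1).factorial : ℝ)) ≠ 0 := by positivity
    have hp0 : poch ((k : ℝ) / 2) m ≠ 0 := ne_of_gt hpoch
    generalize ((2 * m + k - 1).factorial : ℝ) = A
    generalize hM : ((m.factorial : ℝ)) = M at hf1 ⊢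
    generalize hG : (((2 * m + n + k - 1).factorial : ℝ)) = G at hf2 ⊢
    generalize hP : poch ((k : ℝ) / 2) m = P at hp0 ⊢
    generalize ((k : ℝ) / (2 * ((k : ℝ) - 1))) ^ m = W
    field_simp
    ring
  rw [hFn, hFn1]
  have hn' : (n:ℝ) * S^(n-1) * S = n * S^n := by
    cases n with
    | zero => simp
    | succ p => simp only [Nat.succ_sub_one]; rw [pow_succ]; push_cast; ring
  have hm' : (m:ℝ) * E^(m-1) * E = m * E^m := by
    cases m with
    | zero => simp
    | succ p => simp only [Nat.succ_sub_one]; rw [pow_succ]; push_cast; ring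
  have hX2 : S * ((n:ℝ) * S^(n-1) * (C * E^m * ee)) = (n:ℝ) * (C * E^m * S^n * ee) := by
    calc S * ((n:ℝ) * S^(n-1) * (C * E^m * ee)) = ((n:ℝ) * S^(n-1) * S) * (C * E^m * ee) := by ring
      _ = ((n:ℝ) * S^n) * (C * E^m * ee) := by rw [hn']
      _ = (n:ℝ) * (C * E^m * S^n * ee) := by ring
  have hX3 : (2*E) * ((m:ℝ) * E^(m-1) * (C * S^n * ee)) = 2*(m:ℝ)*(C * E^m * S^n * ee) := by
    calc (2*E) * ((m:ℝ) * E^(m-1) * (C * S^n * ee)) = 2*(((m:ℝ) * E^(m-1) * E) * (C * S^n * ee)) := by ring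
      _ = 2*(((m:ℝ) * E^m) * (C * S^n * ee)) := by rw [hm']
      _ = 2*(m:ℝ)*(C * E^m * S^n * ee) := by ring
  have hRHS : (k:ℝ) * ((C*E^m*S^n*ee)/D)
      + S * ((((n:ℝ)*S^(n-1)*(C*E^m*ee)) - C*E^m*S^n*ee)/D)
      + (2*E)*(((m:ℝ)*E^(m-1)*(C*S^n*ee))/D)
      = (D * (C*E^m*S^n*ee) - S*(C*E^m*S^n*ee))/D := by
    have step1 : (k:ℝ) * ((C*E^m*S^n*ee)/D)
        + S * ((((n:ℝ)*S^(n-1)*(C*E^m*ee)) - C*E^m*S^n*ee)/D)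
        + (2*E)*(((m:ℝ)*E^(m-1)*(C*S^n*ee))/D)
        = ((k:ℝ)*(C*E^m*S^n*ee) + (S * ((n:ℝ)*S^(n-1)*(C*E^m*ee)) - S*(C*E^m*S^n*ee))
            + (2*E)*((m:ℝ)*E^(m-1)*(C*S^n*ee)))/D := by ring
    rw [step1, hX2, hX3, hD]
    rw [div_eq_div_iff hD0 hD0]
    ring
  rw [hRHS, sub_div, mul_div_cancel_left₀ _ hD0]
  ring
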